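/- Let E be a 3-dimensional real inner product space and R an algebraic curvature tensor on E with signed sectional curvatures and cvc(0), and assume that not all sectional curvatures of R vanish. Then there exists a unit vector ξ ∈ E, unique up to sign, such that: (a) for a unit vector v ∈ E, the Jacobi operator J_v vanishes identically on v^⊥ if and only if v = ξ or v = −ξ; and (b) for every unit vector v ∉ {ξ, −ξ}, the kernel of J_v restricted to v^⊥ is exactly the 1-dimensional span of ξ − ⟨ξ, v⟩·v. -/

import Mathlib

open scoped RealInnerProductSpace

/-- An algebraic curvature tensor on a real inner product space `E`: a multilinear map
`R : E × E × E × E → ℝ` with the symmetries of the Riemann curvature tensor.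
For vectors `x y z`, the value `R x y z ·` represents the linear functional
`w ↦ ⟨R(x,y)z, w⟩` determined by the curvature operator `R(x,y)z`. -/
structure AlgCurvTensor (E : Type*) [NormedAddCommGroup E] [InnerProductSpace ℝ E] where
  R : E →ₗ[ℝ] E →ₗ[ℝ] E →ₗ[ℝ] E →ₗ[ℝ] ℝ
  antisym_fst : ∀ x y z w : E, R x y z w = - R y x z w
  antisym_snd : ∀ x y z w : E, R x y z w = - R x y w z
  pair_symm : ∀ x y z w : E, R x y z w = R z w x y
  bianchi : ∀ x y z w : E, R x y z w + R y z x w + R z x y w = 0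

/-- `T` has signed sectional curvatures: either all sectional curvatures are `≥ 0`
or all are `≤ 0`. -/
def AlgCurvTensor.SignedSec {E : Type*} [NormedAddCommGroup E] [InnerProductSpace ℝ E]
    (T : AlgCurvTensor E) : Prop :=
  (∀ x y : E, ‖x‖ = 1 → ‖y‖ = 1 → ⟪x, y⟫ = 0 → 0 ≤ T.R x y y x) ∨
  (∀ x y : E, ‖x‖ = 1 → ‖y‖ = 1 → ⟪x, y⟫ = 0 → T.R x y y x ≤ 0)

/-- `T` has constant vector curvature zero: every unit vector is contained in a flat plane. -/
def AlgCurvTensor.CVC0 {E : Type*} [NormedAddCommGroup E] [InnerProductSpace ℝ E]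
    (T : AlgCurvTensor E) : Prop :=
  ∀ v : E, ‖v‖ = 1 → ∃ w : E, ‖w‖ = 1 ∧ ⟪v, w⟫ = 0 ∧ T.R v w w v = 0

section CrossToolkit

variable {E : Type*} [NormedAddCommGroup E] [InnerProductSpace ℝ E]
variable (e : OrthonormalBasis (Fin 3) ℝ E)

private lemma coords_eq {x y : E} (h : ∀ i, ⟪e i, x⟫ = ⟪e i, y⟫) : x = y := by
  rw [← e.sum_repr' x, ← e.sum_repr' y]; simp only [h]

private lemma inner_eq_sum (x y : E) :
    ⟪x, y⟫ = ⟪e 0, x⟫ * ⟪e 0, y⟫ + ⟪e 1, x⟫ * ⟪e 1, y⟫ + ⟪e 2, x⟫ * ⟪e 2, y⟫ := by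
  conv_lhs => rw [← e.sum_repr' x]
  rw [Fin.sum_univ_three]
  simp [inner_add_left, real_inner_smul_left]

private noncomputable def crossB (x y : E) : E :=
  (⟪e 1, x⟫ * ⟪e 2, y⟫ - ⟪e 2, x⟫ * ⟪e 1, y⟫) • e 0 +
  (⟪e 2, x⟫ * ⟪e 0, y⟫ - ⟪e 0, x⟫ * ⟪e 2, y⟫) • e 1 +
  (⟪e 0, x⟫ * ⟪e 1, y⟫ - ⟪e 1, x⟫ * ⟪e 0, y⟫) • e 2

private lemma inner_basis (i j : Fin 3) : ⟪e i, e j⟫ = if i = j then 1 else 0 :=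
  orthonormal_iff_ite.mp e.orthonormal i j

private lemma coord_crossB_0 (x y : E) :
    ⟪e 0, crossB e x y⟫ = ⟪e 1, x⟫ * ⟪e 2, y⟫ - ⟪e 2, x⟫ * ⟪e 1, y⟫ := by
  simp [crossB, inner_add_right, real_inner_smul_right, inner_basis]

private lemma coord_crossB_1 (x y : E) :
    ⟪e 1, crossB e x y⟫ = ⟪e 2, x⟫ * ⟪e 0, y⟫ - ⟪e 0, x⟫ * ⟪e 2, y⟫ := by
  simp [crossB, inner_add_right, real_inner_smul_right, inner_basis]

private lemma coord_crossB_2 (x y : E) :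
    ⟪e 2, crossB e x y⟫ = ⟪e 0, x⟫ * ⟪e 1, y⟫ - ⟪e 1, x⟫ * ⟪e 0, y⟫ := by
  simp [crossB, inner_add_right, real_inner_smul_right, inner_basis]

private lemma triple (x y z : E) :
    ⟪x, crossB e y z⟫ =
      ⟪e 0, x⟫ * (⟪e 1, y⟫ * ⟪e 2, z⟫ - ⟪e 2, y⟫ * ⟪e 1, z⟫) +
      ⟪e 1, x⟫ * (⟪e 2, y⟫ * ⟪e 0, z⟫ - ⟪e 0, y⟫ * ⟪e 2, z⟫) +
      ⟪e 2, x⟫ * (⟪e 0, y⟫ * ⟪e 1, z⟫ - ⟪e 1, y⟫ * ⟪e 0, z⟫) := by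
  rw [inner_eq_sum e x (crossB e y z), coord_crossB_0, coord_crossB_1, coord_crossB_2]

private lemma inner_crossB_self_left (x y : E) : ⟪x, crossB e x y⟫ = 0 := by
  rw [triple]; ring

private lemma inner_crossB_self_right (x y : E) : ⟪y, crossB e x y⟫ = 0 := by
  rw [triple]; ring

private lemma lagrange (x y : E) :
    ⟪crossB e x y, crossB e x y⟫ = ⟪x, x⟫ * ⟪y, y⟫ - ⟪x, y⟫ ^ 2 := by
  rw [inner_eq_sum e (crossB e x y) (crossB e x y), coord_crossB_0, coord_crossB_1,
    coord_crossB_2, inner_eq_sum e x x, inner_eq_sum e y y, inner_eq_sum e x y]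
  ring

private lemma tripleK1 (a b : E) :
    ⟪a, crossB e (crossB e a b) b⟫ = -(⟪a, a⟫ * ⟪b, b⟫ - ⟪a, b⟫ ^ 2) := by
  rw [triple, coord_crossB_0, coord_crossB_1, coord_crossB_2, inner_eq_sum e a a,
    inner_eq_sum e b b, inner_eq_sum e a b]
  ring

private lemma tripleK2 (a b : E) :
    ⟪a, crossB e b (crossB e a b)⟫ = ⟪a, a⟫ * ⟪b, b⟫ - ⟪a, b⟫ ^ 2 := by
  rw [triple, coord_crossB_0, coord_crossB_1, coord_crossB_2, inner_eq_sum e a a,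
    inner_eq_sum e b b, inner_eq_sum e a b]
  ring

private lemma crossB_swap (x y : E) : crossB e y x = - crossB e x y := by
  apply coords_eq e
  intro i
  fin_cases i <;>
  · simp only [Fin.zero_eta, Fin.mk_one, Fin.reduceFinMk, Fin.isValue]
    rw [inner_neg_right]
    simp only [coord_crossB_0, coord_crossB_1, coord_crossB_2]
    ring

private lemma bac_cab (x u : E) :
    crossB e x (crossB e u x) = ⟪x, x⟫ • u - ⟪x, u⟫ • x := by
  apply coords_eq e
  have h : ∀ i : Fin 3, ∀ v w : E, ∀ r s : ℝ,
      ⟪e i, r • v - s • w⟫ = r * ⟪e i, v⟫ - s * ⟪e i, w⟫ := by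
    intro i v w r s; simp [inner_sub_right, real_inner_smul_right]
  intro i
  fin_cases i <;>
  · simp only [Fin.zero_eta, Fin.mk_one, Fin.reduceFinMk, Fin.isValue]
    rw [h, inner_eq_sum e x x, inner_eq_sum e x u]
    simp only [coord_crossB_0, coord_crossB_1, coord_crossB_2]
    ring

private lemma orth3 (v a d : E) (hva : ⟪v, a⟫ = 0) (hvv : ⟪v, v⟫ = 1) (haa : ⟪a, a⟫ ≠ 0)
    (h1 : ⟪v, d⟫ = 0) (h2 : ⟪a, d⟫ = 0) (h3 : ⟪crossB e v a, d⟫ = 0) : d = 0 := by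
  rw [inner_eq_sum e v a] at hva
  rw [inner_eq_sum e v v] at hvv
  rw [inner_eq_sum e v d] at h1
  rw [inner_eq_sum e a d] at h2
  rw [inner_eq_sum e (crossB e v a) d, coord_crossB_0, coord_crossB_1, coord_crossB_2] at h3
  have key : ∀ i : Fin 3, ⟪a, a⟫ * ⟪e i, d⟫ = 0 := by
    intro i
    rw [inner_eq_sum e a a]
    fin_cases i <;>
      simp only [Fin.zero_eta, Fin.mk_one, Fin.reduceFinMk, Fin.isValue]
    · linear_combination
        ((⟪e 0,a⟫*⟪e 0,a⟫+⟪e 1,a⟫*⟪e 1,a⟫+⟪e 2,a⟫*⟪e 2,a⟫)*⟪e 0,v⟫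
          - (⟪e 0,v⟫*⟪e 0,a⟫+⟪e 1,v⟫*⟪e 1,a⟫+⟪e 2,v⟫*⟪e 2,a⟫)*⟪e 0,a⟫) * h1
        + ((⟪e 0,v⟫*⟪e 0,v⟫+⟪e 1,v⟫*⟪e 1,v⟫+⟪e 2,v⟫*⟪e 2,v⟫)*⟪e 0,a⟫
          - (⟪e 0,v⟫*⟪e 0,a⟫+⟪e 1,v⟫*⟪e 1,a⟫+⟪e 2,v⟫*⟪e 2,a⟫)*⟪e 0,v⟫) * h2
        + (⟪e 1,v⟫*⟪e 2,a⟫-⟪e 2,v⟫*⟪e 1,a⟫) * h3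
        + ((⟪e 0,v⟫*⟪e 0,a⟫+⟪e 1,v⟫*⟪e 1,a⟫+⟪e 2,v⟫*⟪e 2,a⟫)*⟪e 0,d⟫) * hva
        + (-(⟪e 0,a⟫*⟪e 0,a⟫+⟪e 1,a⟫*⟪e 1,a⟫+⟪e 2,a⟫*⟪e 2,a⟫)*⟪e 0,d⟫) * hvv
    · linear_combination
        ((⟪e 0,a⟫*⟪e 0,a⟫+⟪e 1,a⟫*⟪e 1,a⟫+⟪e 2,a⟫*⟪e 2,a⟫)*⟪e 1,v⟫
          - (⟪e 0,v⟫*⟪e 0,a⟫+⟪e 1,v⟫*⟪e 1,a⟫+⟪e 2,v⟫*⟪e 2,a⟫)*⟪e 1,a⟫) * h1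
        + ((⟪e 0,v⟫*⟪e 0,v⟫+⟪e 1,v⟫*⟪e 1,v⟫+⟪e 2,v⟫*⟪e 2,v⟫)*⟪e 1,a⟫
          - (⟪e 0,v⟫*⟪e 0,a⟫+⟪e 1,v⟫*⟪e 1,a⟫+⟪e 2,v⟫*⟪e 2,a⟫)*⟪e 1,v⟫) * h2
        + (⟪e 2,v⟫*⟪e 0,a⟫-⟪e 0,v⟫*⟪e 2,a⟫) * h3
        + ((⟪e 0,v⟫*⟪e 0,a⟫+⟪e 1,v⟫*⟪e 1,a⟫+⟪e 2,v⟫*⟪e 2,a⟫)*⟪e 1,d⟫) * hva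
        + (-(⟪e 0,a⟫*⟪e 0,a⟫+⟪e 1,a⟫*⟪e 1,a⟫+⟪e 2,a⟫*⟪e 2,a⟫)*⟪e 1,d⟫) * hvv
    · linear_combination
        ((⟪e 0,a⟫*⟪e 0,a⟫+⟪e 1,a⟫*⟪e 1,a⟫+⟪e 2,a⟫*⟪e 2,a⟫)*⟪e 2,v⟫
          - (⟪e 0,v⟫*⟪e 0,a⟫+⟪e 1,v⟫*⟪e 1,a⟫+⟪e 2,v⟫*⟪e 2,a⟫)*⟪e 2,a⟫) * h1
        + ((⟪e 0,v⟫*⟪e 0,v⟫+⟪e 1,v⟫*⟪e 1,v⟫+⟪e 2,v⟫*⟪e 2,v⟫)*⟪e 2,a⟫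
          - (⟪e 0,v⟫*⟪e 0,a⟫+⟪e 1,v⟫*⟪e 1,a⟫+⟪e 2,v⟫*⟪e 2,a⟫)*⟪e 2,v⟫) * h2
        + (⟪e 0,v⟫*⟪e 1,a⟫-⟪e 1,v⟫*⟪e 0,a⟫) * h3
        + ((⟪e 0,v⟫*⟪e 0,a⟫+⟪e 1,v⟫*⟪e 1,a⟫+⟪e 2,v⟫*⟪e 2,a⟫)*⟪e 2,d⟫) * hva
        + (-(⟪e 0,a⟫*⟪e 0,a⟫+⟪e 1,a⟫*⟪e 1,a⟫+⟪e 2,a⟫*⟪e 2,a⟫)*⟪e 2,d⟫) * hvv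
  apply coords_eq e (y := 0)
  intro i
  have hk := key i
  rcases mul_eq_zero.mp hk with h | h
  · exact absurd h haa
  · simpa using h

private lemma rep_alt (B : E →ₗ[ℝ] E →ₗ[ℝ] ℝ) (hB : ∀ x, B x x = 0) (x y : E) :
    B x y = B (e 1) (e 2) * ⟪e 0, crossB e x y⟫ + B (e 2) (e 0) * ⟪e 1, crossB e x y⟫
      + B (e 0) (e 1) * ⟪e 2, crossB e x y⟫ := by
  have anti : ∀ a b, B a b = - B b a := by
    intro a b
    have h := hB (a + b)
    simp only [map_add, LinearMap.add_apply, hB] at h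
    linarith
  rw [coord_crossB_0, coord_crossB_1, coord_crossB_2]
  conv_lhs => rw [← e.sum_repr' x, ← e.sum_repr' y]
  rw [Fin.sum_univ_three, Fin.sum_univ_three]
  simp only [map_add, map_smul, LinearMap.add_apply, LinearMap.smul_apply, smul_eq_mul]
  rw [hB (e 0), hB (e 1), hB (e 2), anti (e 1) (e 0), anti (e 2) (e 0), anti (e 2) (e 1)]
  ring

private lemma psd_ker {Φ : E →ₗ[ℝ] E →ₗ[ℝ] ℝ} (hpos : ∀ v, 0 ≤ Φ v v)
    (hsym : ∀ v w, Φ v w = Φ w v) {u : E} (hu : Φ u u = 0) : ∀ u', Φ u u' = 0 := by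
  intro u'
  have hball : ∀ t : ℝ, 0 ≤ 2 * t * Φ u u' + t ^ 2 * Φ u' u' := by
    intro t
    have h := hpos (u + t • u')
    simp only [map_add, map_smul, LinearMap.add_apply, LinearMap.smul_apply, smul_eq_mul] at h
    rw [hu, hsym u' u] at h
    ring_nf at h ⊢
    linarith
  have hb0 : 0 ≤ Φ u' u' := hpos u'
  by_contra hne
  have ha2 : 0 < Φ u u' ^ 2 := (sq_nonneg _).lt_of_ne (Ne.symm (pow_ne_zero 2 hne))
  rcases eq_or_lt_of_le hb0 with hb | hb
  · have h := hball (- Φ u u')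
    rw [← hb] at h
    nlinarith
  · have h := hball (- Φ u u' / Φ u' u')
    have hrw : 2 * (- Φ u u' / Φ u' u') * Φ u u' + (- Φ u u' / Φ u' u') ^ 2 * Φ u' u'
        = - (Φ u u' ^ 2) / Φ u' u' := by
      field_simp
      ring
    rw [hrw] at h
    have : - (Φ u u' ^ 2) / Φ u' u' < 0 := div_neg_of_neg_of_pos (by linarith) hb
    linarith

private noncomputable def psiB (M : Fin 3 → Fin 3 → ℝ) : E →ₗ[ℝ] E →ₗ[ℝ] ℝ :=
  ∑ i, ∑ j, M i j • ((innerSL ℝ (e i)).toLinearMap.smulRight ((innerSL ℝ (e j)).toLinearMap))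

private lemma psiB_apply (M : Fin 3 → Fin 3 → ℝ) (u u' : E) :
    psiB e M u u' = ∑ i, ∑ j, M i j * (⟪e i, u⟫ * ⟪e j, u'⟫) := by
  simp [psiB, LinearMap.sum_apply, LinearMap.smulRight_apply, mul_assoc]

private lemma norm_eq_one_of_inner_self {y : E} (h : ⟪y, y⟫ = 1) : ‖y‖ = 1 := by
  have h2 : ‖y‖ * ‖y‖ = 1 := by rw [← real_inner_self_eq_norm_mul_norm]; exact h
  nlinarith [norm_nonneg y]

/-- every unit vector is the cross product of an orthonormal pair -/
private lemma exists_cross_eq [FiniteDimensional ℝ E] (hdim : Module.finrank ℝ E = 3)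
    (u : E) (hu : ‖u‖ = 1) :
    ∃ x y : E, ‖x‖ = 1 ∧ ‖y‖ = 1 ∧ ⟪x, y⟫ = 0 ∧ crossB e x y = u := by
  have hu0 : u ≠ 0 := fun h => by simp [h] at hu
  -- find a unit vector orthogonal to u
  have hne : ((ℝ ∙ u)ᗮ : Submodule ℝ E) ≠ ⊥ := by
    intro hbot
    have h1 : Module.finrank ℝ (ℝ ∙ u) = 1 := finrank_span_singleton hu0
    have h2 := (ℝ ∙ u).finrank_add_finrank_orthogonal
    rw [hbot, h1, hdim] at h2
    simp at h2
  obtain ⟨x₀, hx₀m, hx₀⟩ := Submodule.exists_mem_ne_zero_of_ne_bot hne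
  set x : E := ‖x₀‖⁻¹ • x₀ with hxdef
  have hx1 : ‖x‖ = 1 := norm_smul_inv_norm hx₀
  have hux : ⟪u, x⟫ = 0 := by
    have h := Submodule.mem_orthogonal_singleton_iff_inner_right.mp hx₀m
    rw [hxdef, real_inner_smul_right, h, mul_zero]
  refine ⟨x, crossB e u x, hx1, ?_, inner_crossB_self_right e u x, ?_⟩
  · apply norm_eq_one_of_inner_self
    rw [lagrange, real_inner_self_eq_norm_mul_norm, real_inner_self_eq_norm_mul_norm, hu, hx1, hux]
    ring
  · have hux' : ⟪x, u⟫ = 0 := by rw [real_inner_comm]; exact hux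
    rw [bac_cab, real_inner_self_eq_norm_mul_norm, hx1, hux']
    simp

end CrossToolkit

set_option maxHeartbeats 1600000 in
/-- For a nonisotropic algebraic curvature tensor on a `3`-dimensional inner product space
with signed sectional curvatures and `cvc(0)`, there is a unit vector `ξ`, unique up to sign,
such that: (a) the Jacobi operator `J_v` of a unit vector `v` vanishes identically on `v^⊥`
(expressed by the vanishing of all inner products `⟨R(w,v)v, u⟩ = R w v v u` for `w ⟂ v`)
if and only if `v = ±ξ`; and (b) for every unit vector `v ∉ {ξ, -ξ}`, the kernel of `J_v`
restricted to `v^⊥` is exactly the line spanned by `ξ - ⟪ξ, v⟫ • v`. (The uniqueness of `ξ`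
up to sign is immediate from the "if and only if" in (a).) -/
theorem cvc0_nonisotropic_line {E : Type*} [NormedAddCommGroup E]
    [InnerProductSpace ℝ E] [FiniteDimensional ℝ E] (hdim : Module.finrank ℝ E = 3)
    (T : AlgCurvTensor E) (hsigned : T.SignedSec) (hcvc : T.CVC0)
    (hnonflat : ¬ ∀ x y : E, ‖x‖ = 1 → ‖y‖ = 1 → ⟪x, y⟫ = 0 → T.R x y y x = 0) :
    ∃ ξ : E, ‖ξ‖ = 1 ∧
      (∀ v : E, ‖v‖ = 1 →
        ((∀ w : E, ⟪v, w⟫ = 0 → ∀ u : E, T.R w v v u = 0) ↔ (v = ξ ∨ v = -ξ))) ∧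
      (∀ v : E, ‖v‖ = 1 → v ≠ ξ → v ≠ -ξ →
        ∀ w : E, ⟪v, w⟫ = 0 →
          ((∀ u : E, T.R w v v u = 0) ↔ w ∈ Submodule.span ℝ {ξ - ⟪ξ, v⟫ • v})) := by
  classical
  set e : OrthonormalBasis (Fin 3) ℝ E := (stdOrthonormalBasis ℝ E).reindex (finCongr hdim)
    with he
  -- vanishing on diagonals
  have hR0 : ∀ x z w : E, T.R x x z w = 0 := fun x z w => by
    have := T.antisym_fst x x z w; linarith
  have hR0' : ∀ x y z : E, T.R x y z z = 0 := fun x y z => by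
    have := T.antisym_snd x y z z; linarith
  -- first-slot representation
  have rep1 : ∀ x y z w : E, T.R x y z w =
      T.R (e 1) (e 2) z w * ⟪e 0, crossB e x y⟫ + T.R (e 2) (e 0) z w * ⟪e 1, crossB e x y⟫
      + T.R (e 0) (e 1) z w * ⟪e 2, crossB e x y⟫ := by
    intro x y z w
    let B : E →ₗ[ℝ] E →ₗ[ℝ] ℝ :=
      T.R.compr₂ ((LinearMap.applyₗ w).comp (LinearMap.applyₗ z))
    have hBapp : ∀ a b : E, B a b = T.R a b z w := fun a b => rfl
    have h := rep_alt e B (fun a => by rw [hBapp]; exact hR0 a z w) x y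
    rw [hBapp, hBapp, hBapp, hBapp] at h
    exact h
  have rep2 : ∀ a b z w : E, T.R a b z w =
      T.R a b (e 1) (e 2) * ⟪e 0, crossB e z w⟫ + T.R a b (e 2) (e 0) * ⟪e 1, crossB e z w⟫
      + T.R a b (e 0) (e 1) * ⟪e 2, crossB e z w⟫ := by
    intro a b z w
    exact rep_alt e (T.R a b) (fun c => hR0' a b c) z w
  -- the curvature bilinear form on "bivectors"
  have hcomm : ∀ p q : E, ⟪p, q⟫ = ⟪q, p⟫ := fun p q => real_inner_comm _ _
  obtain ⟨Ψ, hΨapp⟩ : ∃ Ψ : E →ₗ[ℝ] E →ₗ[ℝ] ℝ, ∀ u u' : E,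
      Ψ u u' = ∑ i, ∑ j, T.R (e (i + 1)) (e (i + 2)) (e (j + 1)) (e (j + 2)) *
        (⟪e i, u⟫ * ⟪e j, u'⟫) :=
    ⟨psiB e (fun i j => T.R (e (i + 1)) (e (i + 2)) (e (j + 1)) (e (j + 2))),
      fun u u' => psiB_apply e _ u u'⟩
  have hfin : ((0:Fin 3)+1 = 1 ∧ (0:Fin 3)+2 = 2 ∧ (1:Fin 3)+1 = 2) ∧
      ((1:Fin 3)+2 = 0 ∧ (2:Fin 3)+1 = 0 ∧ (2:Fin 3)+2 = 1) := by decide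
  have rep : ∀ x y z w : E, T.R x y z w = Ψ (crossB e x y) (crossB e z w) := by
    intro x y z w
    rw [hΨapp]
    simp only [Fin.sum_univ_three, hfin.1.1, hfin.1.2.1, hfin.1.2.2, hfin.2.1, hfin.2.2.1,
      hfin.2.2.2]
    rw [rep1 x y z w, rep2 (e 1) (e 2) z w, rep2 (e 2) (e 0) z w, rep2 (e 0) (e 1) z w]
    ring
  have hsymΨ : ∀ a b : E, Ψ a b = Ψ b a := by
    intro a b
    rw [hΨapp, hΨapp]
    simp only [Fin.sum_univ_three, hfin.1.1, hfin.1.2.1, hfin.1.2.2, hfin.2.1, hfin.2.2.1,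
      hfin.2.2.2]
    rw [T.pair_symm (e 2) (e 0) (e 1) (e 2), T.pair_symm (e 0) (e 1) (e 1) (e 2),
      T.pair_symm (e 0) (e 1) (e 2) (e 0)]
    ring
  -- sign transfer
  have hswap : ∀ x y : E, crossB e y x = - crossB e x y := crossB_swap e
  have hsec : ∀ x y : E, ‖x‖ = 1 → ‖y‖ = 1 → ⟪x, y⟫ = 0 →
      T.R x y y x = - Ψ (crossB e x y) (crossB e x y) := by
    intro x y hx hy hxy
    rw [rep x y y x, hswap x y]
    simp
  have hsig : (∀ u : E, 0 ≤ Ψ u u) ∨ (∀ u : E, Ψ u u ≤ 0) := by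
    have key : ∀ (sgn : ℝ), (∀ x y : E, ‖x‖ = 1 → ‖y‖ = 1 → ⟪x, y⟫ = 0 →
        0 ≤ sgn * T.R x y y x) → ∀ u : E, sgn * Ψ u u ≤ 0 := by
      intro sgn hsgn u
      rcases eq_or_ne u 0 with rfl | hu
      · simp
      · set c : E := ‖u‖⁻¹ • u with hc
        have hc1 : ‖c‖ = 1 := norm_smul_inv_norm hu
        obtain ⟨x, y, hx, hy, hxy, hcr⟩ := exists_cross_eq e hdim c hc1
        have h1 := hsgn x y hx hy hxy
        rw [hsec x y hx hy hxy, hcr] at h1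
        have hucc : u = ‖u‖ • c := by
          rw [hc, smul_smul, mul_inv_cancel₀ (norm_ne_zero_iff.mpr hu), one_smul]
        have h2 : Ψ (‖u‖ • c) (‖u‖ • c) = ‖u‖ ^ 2 * Ψ c c := by
          simp only [map_smul, LinearMap.smul_apply, smul_eq_mul]
          ring
        rw [← hucc] at h2
        rw [h2]
        nlinarith [sq_nonneg ‖u‖]
    rcases hsigned with hs | hs
    · right
      intro u
      have := key 1 (by intro x y hx hy hxy; simpa using hs x y hx hy hxy) u
      linarith
    · left
      intro u
      have := key (-1) (by intro x y hx hy hxy; have := hs x y hx hy hxy; nlinarith) u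
      nlinarith
  -- kernel lemma
  have hkerΨ : ∀ u : E, Ψ u u = 0 → ∀ u', Ψ u u' = 0 := by
    rcases hsig with hp | hp
    · intro u hu u'
      exact psd_ker hp hsymΨ hu u'
    · intro u hu u'
      have h := psd_ker (Φ := -Ψ) (fun v => by simpa using hp v)
        (fun v w => by simp [hsymΨ v w]) (u := u) (by simpa using hu) u'
      simpa using h
  obtain ⟨K, hK⟩ : ∃ K : Submodule ℝ E, K = LinearMap.ker Ψ := ⟨_, rfl⟩
  have hmemKer : ∀ u : E, Ψ u u = 0 → u ∈ K := by
    intro u hu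
    rw [hK, LinearMap.mem_ker]
    exact LinearMap.ext fun u' => hkerΨ u hu u'
  have hKval : ∀ u ∈ K, ∀ u', Ψ u u' = 0 := by
    intro u hu u'
    rw [hK, LinearMap.mem_ker] at hu
    rw [hu]
    rfl
  -- every unit vector has a K-vector orthogonal to it
  have hplane : ∀ c : E, ‖c‖ = 1 → ∃ u : E, ‖u‖ = 1 ∧ ⟪c, u⟫ = 0 ∧ u ∈ K := by
    intro c hc
    obtain ⟨w, hw1, hcw, hflat⟩ := hcvc c hc
    refine ⟨crossB e c w, ?_, inner_crossB_self_left e c w, ?_⟩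
    · apply norm_eq_one_of_inner_self
      rw [lagrange, real_inner_self_eq_norm_mul_norm, real_inner_self_eq_norm_mul_norm,
        hc, hw1, hcw]
      ring
    · apply hmemKer
      have h := hsec c w hc hw1 hcw
      rw [hflat] at h
      linarith
  -- nonflat data
  push_neg at hnonflat
  obtain ⟨x₀, y₀, hx₀, hy₀, hxy₀, hR₀⟩ := hnonflat
  -- dimension of K is 2
  have hdK2 : 2 ≤ Module.finrank ℝ K := by
    by_contra hlt
    push_neg at hlt
    have hle1 : Module.finrank ℝ K ≤ 1 := by omega
    have hprin := (K.finrank_le_one_iff_isPrincipal).mp hle1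
    obtain ⟨k, hk⟩ := hprin.principal
    rcases eq_or_ne k 0 with rfl | hk0
    · rw [Submodule.span_zero_singleton] at hk
      obtain ⟨u, hu1, -, huK⟩ := hplane (e 0) (e.orthonormal.1 0)
      rw [hk] at huK
      rw [Submodule.mem_bot] at huK
      rw [huK] at hu1
      simp at hu1
    · obtain ⟨u, hu1, hcu, huK⟩ := hplane (‖k‖⁻¹ • k) (norm_smul_inv_norm hk0)
      rw [hk, Submodule.mem_span_singleton] at huK
      obtain ⟨s, hs⟩ := huK
      rw [← hs, real_inner_smul_left, real_inner_smul_right] at hcu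
      have hkk : ⟪k, k⟫ ≠ 0 := inner_self_ne_zero.mpr hk0
      have hkn : (‖k‖ : ℝ)⁻¹ ≠ 0 := inv_ne_zero (norm_ne_zero_iff.mpr hk0)
      have hs0 : s = 0 := by
        rcases mul_eq_zero.mp hcu with h | h
        · exact absurd h hkn
        · rcases mul_eq_zero.mp h with h' | h'
          · exact h'
          · exact absurd h' hkk
      rw [hs0, zero_smul] at hs
      rw [← hs] at hu1
      simp at hu1
  have hdK3 : Module.finrank ℝ K ≤ 2 := by
    by_contra hlt
    push_neg at hlt
    have hfr : Module.finrank ℝ K = Module.finrank ℝ E := by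
      have := K.finrank_le
      omega
    have hKtop : K = ⊤ := Submodule.eq_top_of_finrank_eq hfr
    apply hR₀
    rw [hsec x₀ y₀ hx₀ hy₀ hxy₀, hKval (crossB e x₀ y₀) (hKtop ▸ Submodule.mem_top)]
    ring
  have hKdim : Module.finrank ℝ K = 2 := le_antisymm hdK3 hdK2
  have hKorth : Module.finrank ℝ (Kᗮ : Submodule ℝ E) = 1 := by
    have := K.finrank_add_finrank_orthogonal
    rw [hKdim, hdim] at this
    omega
  have hKobot : (Kᗮ : Submodule ℝ E) ≠ ⊥ := by
    intro h
    rw [h, finrank_bot] at hKorth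
    exact one_ne_zero hKorth.symm
  obtain ⟨ξ₀, hξ₀m, hξ₀⟩ := Submodule.exists_mem_ne_zero_of_ne_bot hKobot
  obtain ⟨ξ, hξ1, hξm⟩ : ∃ ξ : E, ‖ξ‖ = 1 ∧ ξ ∈ Kᗮ :=
    ⟨‖ξ₀‖⁻¹ • ξ₀, norm_smul_inv_norm hξ₀, Submodule.smul_mem _ _ hξ₀m⟩
  have hξ0 : ξ ≠ 0 := fun h => by rw [h] at hξ1; simp at hξ1
  have hspan : (ℝ ∙ ξ) = Kᗮ := by
    apply Submodule.eq_of_le_of_finrank_eq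
    · rw [Submodule.span_le, Set.singleton_subset_iff]
      exact hξm
    · rw [finrank_span_singleton hξ0, hKorth]
  have hKeq : K = (ℝ ∙ ξ)ᗮ := by
    rw [hspan]
    exact (Submodule.orthogonal_orthogonal K).symm
  have hmemK : ∀ u : E, u ∈ K ↔ ⟪ξ, u⟫ = 0 := by
    intro u
    rw [hKeq]
    exact Submodule.mem_orthogonal_singleton_iff_inner_right
  have hξξ : ⟪ξ, ξ⟫ = 1 := by
    rw [real_inner_self_eq_norm_mul_norm, hξ1]; norm_num
  -- master formula
  have hmaster : ∀ u u' : E, Ψ u u' = Ψ ξ ξ * (⟪ξ, u⟫ * ⟪ξ, u'⟫) := by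
    have hrad : ∀ u : E, Ψ (u - ⟪ξ, u⟫ • ξ) = 0 := by
      intro u
      have hm : u - ⟪ξ, u⟫ • ξ ∈ K := by
        rw [hmemK]
        rw [inner_sub_right, real_inner_smul_right, hξξ]
        ring
      rw [hK, LinearMap.mem_ker] at hm
      exact hm
    intro u u'
    have h1 : Ψ u u' = ⟪ξ, u⟫ * Ψ ξ u' := by
      have : Ψ u u' = Ψ (⟪ξ, u⟫ • ξ + (u - ⟪ξ, u⟫ • ξ)) u' := by
        congr 2
        abel
      rw [this]
      simp only [map_add, LinearMap.add_apply, map_smul, LinearMap.smul_apply, smul_eq_mul,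
        hrad u]
      simp
    have h2 : Ψ ξ u' = ⟪ξ, u'⟫ * Ψ ξ ξ := by
      rw [hsymΨ ξ u']
      have : Ψ u' ξ = Ψ (⟪ξ, u'⟫ • ξ + (u' - ⟪ξ, u'⟫ • ξ)) ξ := by
        congr 2
        abel
      rw [this]
      simp only [map_add, LinearMap.add_apply, map_smul, LinearMap.smul_apply, smul_eq_mul,
        hrad u']
      rw [hsymΨ ξ]
      simp
    rw [h1, h2]
    ring
  have hμ : Ψ ξ ξ ≠ 0 := by
    intro h
    apply hR₀
    rw [hsec x₀ y₀ hx₀ hy₀ hxy₀, hmaster, h]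
    ring
  have masterR : ∀ x y z w : E, T.R x y z w =
      Ψ ξ ξ * (⟪ξ, crossB e x y⟫ * ⟪ξ, crossB e z w⟫) := by
    intro x y z w
    rw [rep x y z w, hmaster]
  -- the ±1 inner product criterion
  have tsq : ∀ v : E, ‖v‖ = 1 → v ≠ ξ → v ≠ -ξ → ⟪ξ, v⟫ ^ 2 ≠ 1 := by
    intro v hv hv1 hv2 ht
    have hfac : (⟪ξ, v⟫ - 1) * (⟪ξ, v⟫ + 1) = 0 := by nlinarith
    rcases mul_eq_zero.mp hfac with h | h
    · have h1 : ⟪ξ, v⟫ = 1 := by linarith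
      have := (inner_eq_one_iff_of_norm_eq_one hξ1 hv).mp h1
      exact hv1 this.symm
    · have h1 : ⟪ξ, -v⟫ = 1 := by
        rw [inner_neg_right]; linarith
      have h2 := (inner_eq_one_iff_of_norm_eq_one hξ1 (by rw [norm_neg]; exact hv)).mp h1
      apply hv2
      rw [h2, neg_neg]
  refine ⟨ξ, hξ1, ?_, ?_⟩
  · -- part (a)
    intro v hv
    have hvv : ⟪v, v⟫ = 1 := by rw [real_inner_self_eq_norm_mul_norm, hv]; norm_num
    constructor
    · intro h
      by_contra hc
      push_neg at hc
      obtain ⟨hv1, hv2⟩ := hc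
      have ht := tsq v hv hv1 hv2
      have hvn : ⟪v, crossB e ξ v⟫ = 0 := inner_crossB_self_right e ξ v
      have h0 := h (crossB e ξ v) hvn (crossB e ξ v)
      rw [masterR, tripleK1 e ξ v, tripleK2 e ξ v, hξξ, hvv] at h0
      apply ht
      have hsq : (1 - ⟪ξ, v⟫ ^ 2) ^ 2 = 0 := by
        rcases mul_eq_zero.mp h0 with h' | h'
        · exact absurd h' hμ
        · nlinarith
      have := pow_eq_zero_iff (n := 2) (by norm_num) |>.mp hsq
      linarith
    · intro h w hvw u
      rw [masterR]
      have hfac : ⟪ξ, crossB e v u⟫ = 0 := by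
        rcases h with h' | h'
        · rw [h']
          exact inner_crossB_self_left e ξ u
        · rw [show ξ = -v by rw [h', neg_neg], inner_neg_left, inner_crossB_self_left e v u]
          ring
      rw [hfac]
      ring
  · -- part (b)
    intro v hv hv1 hv2 w hvw
    have hvv : ⟪v, v⟫ = 1 := by rw [real_inner_self_eq_norm_mul_norm, hv]; norm_num
    have ht := tsq v hv hv1 hv2
    obtain ⟨a, hadef⟩ : ∃ a : E, a = ξ - ⟪ξ, v⟫ • v := ⟨_, rfl⟩
    rw [← hadef]
    have hacoord : ∀ i : Fin 3, ⟪e i, a⟫ = ⟪e i, ξ⟫ - ⟪ξ, v⟫ * ⟪e i, v⟫ := by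
      intro i
      rw [hadef, inner_sub_right, real_inner_smul_right]
    have hva : ⟪v, a⟫ = 0 := by
      rw [hadef, inner_sub_right, real_inner_smul_right, hvv, hcomm v ξ]
      ring
    have haa : ⟪a, a⟫ = 1 - ⟪ξ, v⟫ ^ 2 := by
      rw [hadef]
      simp only [inner_sub_left, inner_sub_right, real_inner_smul_left, real_inner_smul_right,
        hξξ, hvv]
      rw [hcomm v ξ]
      ring
    have hane : ⟪a, a⟫ ≠ 0 := by
      rw [haa]
      intro h'
      exact ht (by linarith)
    constructor
    · intro h
      -- first extract ⟪ξ, crossB w v⟫ = 0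
      have h0 := h (crossB e ξ v)
      rw [masterR, tripleK2 e ξ v, hξξ, hvv] at h0
      have hwv : ⟪ξ, crossB e w v⟫ = 0 := by
        rcases mul_eq_zero.mp h0 with h' | h'
        · exact absurd h' hμ
        · rcases mul_eq_zero.mp h' with h'' | h''
          · exact h''
          · exfalso; exact ht (by linarith)
      -- the cross relation
      have hcross : ⟪crossB e v a, w⟫ = ⟪ξ, crossB e w v⟫ := by
        rw [inner_eq_sum e (crossB e v a) w, coord_crossB_0, coord_crossB_1, coord_crossB_2,
          triple e ξ w v]
        rw [hacoord 0, hacoord 1, hacoord 2]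
        ring
      set s : ℝ := ⟪a, w⟫ / ⟪a, a⟫ with hsdef
      have hd : w - s • a = 0 := by
        apply orth3 e v a (w - s • a) hva hvv hane
        · rw [inner_sub_right, real_inner_smul_right, hvw, hva]
          ring
        · rw [inner_sub_right, real_inner_smul_right, hsdef]
          field_simp
          ring
        · rw [inner_sub_right, real_inner_smul_right, hcross, hwv,
            hcomm (crossB e v a) a, inner_crossB_self_right e v a]
          ring
      have hw : w = s • a := by
        have := sub_eq_zero.mp hd
        exact this.symm ▸ rfl
      rw [Submodule.mem_span_singleton]
      exact ⟨s, hw.symm⟩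
    · intro hmem u
      rw [Submodule.mem_span_singleton] at hmem
      obtain ⟨s, hs⟩ := hmem
      rw [masterR]
      have hzero : ⟪ξ, crossB e w v⟫ = 0 := by
        rw [← hs, triple e ξ (s • a) v]
        have hcs : ∀ i : Fin 3, ⟪e i, s • a⟫ = s * (⟪e i, ξ⟫ - ⟪ξ, v⟫ * ⟪e i, v⟫) := by
          intro i
          rw [real_inner_smul_right, hacoord i]
        rw [hcs 0, hcs 1, hcs 2]
        ring
      rw [hzero]
      ring
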